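/- Suppose for all x, P(Y₀=1 | D=1, X=x) > 0, Y₀ ⫫ D | X, and X ⫫ D | Y₀=1. Then P(T=1 | Y₀=1, D=1) ≤ E[ min{1, P(T=1 | D=1, X) / P(Y₀=1 | D=0, X)} | Y₀=1, D=0 ], where Y₀ is observed as Y on D=0. -/

import Mathlib

open MeasureTheory

/-- Conditional probability `P(A | B) = P(A ∩ B) / P(B)` as a real number. -/
noncomputable def condP {Ω : Type*} [MeasurableSpace Ω] (μ : Measure Ω) (A B : Set Ω) : ℝ :=
  (μ (A ∩ B)).toReal / (μ B).toReal

lemma div_pos_parts {a b : ℝ} (ha : 0 ≤ a) (hb : 0 ≤ b) (h : 0 < a / b) :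
    0 < a ∧ 0 < b := by
  rcases hb.lt_or_eq with hb' | hb'
  · refine ⟨?_, hb'⟩
    by_contra hna
    push_neg at hna
    have : a = 0 := le_antisymm hna ha
    simp [this] at h
  · rw [← hb'] at h; simp at h

lemma sum_decomp {Ω ι : Type*} [MeasurableSpace Ω] [Fintype ι]
    (μ : Measure Ω) [IsProbabilityMeasure μ] (X : Ω → ι)
    (hXm : ∀ x : ι, MeasurableSet {ω | X ω = x}) (S : Set Ω) (hS : MeasurableSet S) :
    (μ S).toReal = ∑ x : ι, (μ (S ∩ {ω | X ω = x})).toReal := by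
  have h1 : S = ⋃ x : ι, S ∩ {ω | X ω = x} := by
    ext ω
    simp only [Set.mem_iUnion, Set.mem_inter_iff, Set.mem_setOf_eq]
    exact ⟨fun h => ⟨X ω, h, rfl⟩, fun ⟨x, h, _⟩ => h⟩
  have hdisj : Pairwise (Function.onFun Disjoint fun x => S ∩ {ω | X ω = x}) := by
    intro a b hab
    refine Set.disjoint_left.mpr ?_
    rintro ω ⟨_, ha⟩ ⟨_, hb⟩
    exact hab (ha ▸ hb ▸ rfl)
  have h2 : μ S = ∑' x : ι, μ (S ∩ {ω | X ω = x}) := by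
    conv_lhs => rw [h1]
    exact measure_iUnion hdisj (fun x => hS.inter (hXm x))
  rw [h2, tsum_fintype, ENNReal.toReal_sum (fun x _ => measure_ne_top μ _)]

/-- Upper bound under arbitrary unmeasured confounding:
`P(T=1 | Y₀=1, D=1) ≤ E[min{1, P(T=1|D=1,X)/P(Y₀=1|D=0,X)} | Y₀=1, D=0]`. -/
theorem partial_identification_upper_bound
    {Ω ι : Type*} [MeasurableSpace Ω] [Fintype ι]
    (μ : Measure Ω) [IsProbabilityMeasure μ]
    (T Y0 D : Ω → ℕ) (X : Ω → ι)
    (hTm : Measurable T) (hY0m : Measurable Y0) (hDm : Measurable D)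
    (hXm : ∀ x : ι, MeasurableSet {ω | X ω = x})
    (hTbin : ∀ ω, T ω = 0 ∨ T ω = 1)
    (hY0bin : ∀ ω, Y0 ω = 0 ∨ Y0 ω = 1)
    (hDbin : ∀ ω, D ω = 0 ∨ D ω = 1)
    -- stable baseline risk: Y₀ ⫫ D | X
    (hSBR : ∀ (x : ι) (i j : ℕ),
      condP μ ({ω | Y0 ω = i} ∩ {ω | D ω = j}) {ω | X ω = x} =
        condP μ {ω | Y0 ω = i} {ω | X ω = x} * condP μ {ω | D ω = j} {ω | X ω = x})
    -- covariate stability: X ⫫ D | Y₀ = 1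
    (hCS : ∀ (x : ι) (j : ℕ),
      condP μ ({ω | X ω = x} ∩ {ω | D ω = j}) {ω | Y0 ω = 1} =
        condP μ {ω | X ω = x} {ω | Y0 ω = 1} * condP μ {ω | D ω = j} {ω | Y0 ω = 1})
    -- positivity: P(Y₀ = 1 | D = 1, X = x) > 0 and well-definedness of conditionals
    (hposY1 : ∀ x : ι, 0 < condP μ {ω | Y0 ω = 1} ({ω | D ω = 1} ∩ {ω | X ω = x}))
    (hposY0 : ∀ x : ι, 0 < condP μ {ω | Y0 ω = 1} ({ω | D ω = 0} ∩ {ω | X ω = x}))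
    (hpos1 : 0 < μ ({ω | Y0 ω = 1} ∩ {ω | D ω = 1}))
    (hpos0 : 0 < μ ({ω | Y0 ω = 1} ∩ {ω | D ω = 0}))
    (hposY : 0 < μ {ω | Y0 ω = 1})
    (hposx1 : ∀ x : ι, 0 < μ ({ω | D ω = 1} ∩ {ω | X ω = x}))
    (hposx0 : ∀ x : ι, 0 < μ ({ω | D ω = 0} ∩ {ω | X ω = x}))
    (hposx : ∀ x : ι, 0 < μ {ω | X ω = x}) :
    condP μ {ω | T ω = 1} ({ω | Y0 ω = 1} ∩ {ω | D ω = 1}) ≤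
      ∑ x : ι, min 1
          (condP μ {ω | T ω = 1} ({ω | D ω = 1} ∩ {ω | X ω = x}) /
            condP μ {ω | Y0 ω = 1} ({ω | D ω = 0} ∩ {ω | X ω = x})) *
        condP μ {ω | X ω = x} ({ω | Y0 ω = 1} ∩ {ω | D ω = 0}) := by
  classical
  set A : Set Ω := {ω | T ω = 1} with hAdef
  set Y : Set Ω := {ω | Y0 ω = 1} with hYdef
  set D1 : Set Ω := {ω | D ω = 1} with hD1def
  set D0 : Set Ω := {ω | D ω = 0} with hD0def
  set Xs : ι → Set Ω := fun x => {ω | X ω = x} with hXsdef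
  have hA : MeasurableSet A := hTm (measurableSet_singleton 1)
  have hY : MeasurableSet Y := hY0m (measurableSet_singleton 1)
  have hD1m : MeasurableSet D1 := hDm (measurableSet_singleton 1)
  set m : Set Ω → ℝ := fun S => (μ S).toReal with hmdef
  have mnonneg : ∀ S : Set Ω, 0 ≤ m S := fun S => ENNReal.toReal_nonneg
  have mmono : ∀ {S U : Set Ω}, S ⊆ U → m S ≤ m U := fun h =>
    ENNReal.toReal_mono (measure_ne_top μ _) (measure_mono h)
  have mpos : ∀ {S : Set Ω}, 0 < μ S → 0 < m S := fun h =>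
    ENNReal.toReal_pos h.ne' (measure_ne_top μ _)
  have meq : ∀ {S U : Set Ω}, S = U → m S = m U := fun h => by rw [h]
  -- positivity facts
  have hm1 : 0 < m (Y ∩ D1) := mpos hpos1
  have hm0 : 0 < m (Y ∩ D0) := mpos hpos0
  have hyr : 0 < m Y := mpos hposY
  -- main per-x bound
  have key : ∀ x : ι,
      m (A ∩ (Y ∩ D1) ∩ Xs x) / m (Y ∩ D1) ≤
        min 1 (condP μ A (D1 ∩ Xs x) / condP μ Y (D0 ∩ Xs x)) *
          condP μ (Xs x) (Y ∩ D0) := by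
    intro x
    have hxr : 0 < m (Xs x) := mpos (hposx x)
    have hd1 : 0 < m (D1 ∩ Xs x) := mpos (hposx1 x)
    have hd0 : 0 < m (D0 ∩ Xs x) := mpos (hposx0 x)
    obtain ⟨hb1, -⟩ := div_pos_parts (mnonneg _) (mnonneg _) (hposY1 x)
    obtain ⟨hb0, -⟩ := div_pos_parts (mnonneg _) (mnonneg _) (hposY0 x)
    -- hb1 : 0 < m (Y ∩ (D1 ∩ Xs x)), hb0 : 0 < m (Y ∩ (D0 ∩ Xs x))
    -- SBR consequence: b1/d1 = b0/d0
    have hSBR1 := hSBR x 1 1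
    have hSBR0 := hSBR x 1 0
    have e1 : m ((Y ∩ D1) ∩ Xs x) / m (Xs x) = (m (Y ∩ Xs x) / m (Xs x)) * (m (D1 ∩ Xs x) / m (Xs x)) := hSBR1
    have e0 : m ((Y ∩ D0) ∩ Xs x) / m (Xs x) = (m (Y ∩ Xs x) / m (Xs x)) * (m (D0 ∩ Xs x) / m (Xs x)) := hSBR0
    have assoc1 : (Y ∩ D1) ∩ Xs x = Y ∩ (D1 ∩ Xs x) := Set.inter_assoc _ _ _
    have assoc0 : (Y ∩ D0) ∩ Xs x = Y ∩ (D0 ∩ Xs x) := Set.inter_assoc _ _ _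
    rw [meq assoc1] at e1
    rw [meq assoc0] at e0
    have hswitch : m (Y ∩ (D0 ∩ Xs x)) / m (D0 ∩ Xs x) = m (Y ∩ (D1 ∩ Xs x)) / m (D1 ∩ Xs x) := by
      field_simp at e1 e0
      rw [div_eq_div_iff hd0.ne' hd1.ne']
      have h1 : m (Y ∩ (D1 ∩ Xs x)) * m (Xs x) = m (Y ∩ Xs x) * m (D1 ∩ Xs x) :=
        mul_right_cancel₀ hxr.ne' (by linear_combination m (Xs x) * e1)
      have h0 : m (Y ∩ (D0 ∩ Xs x)) * m (Xs x) = m (Y ∩ Xs x) * m (D0 ∩ Xs x) :=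
        mul_right_cancel₀ hxr.ne' (by linear_combination m (Xs x) * e0)
      exact mul_right_cancel₀ hxr.ne' (by linear_combination (m (D1 ∩ Xs x) * h0 - m (D0 ∩ Xs x) * h1))
    -- CS consequence: c1/m1 = c0/m0
    have hc1 := hCS x 1
    have hc0 := hCS x 0
    have f1 : m ((Xs x ∩ D1) ∩ Y) / m Y = (m (Xs x ∩ Y) / m Y) * (m (D1 ∩ Y) / m Y) := hc1
    have f0 : m ((Xs x ∩ D0) ∩ Y) / m Y = (m (Xs x ∩ Y) / m Y) * (m (D0 ∩ Y) / m Y) := hc0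
    have g1 : (Xs x ∩ D1) ∩ Y = Xs x ∩ (Y ∩ D1) := by
      ext ω; simp only [Set.mem_inter_iff]; tauto
    have g0 : (Xs x ∩ D0) ∩ Y = Xs x ∩ (Y ∩ D0) := by
      ext ω; simp only [Set.mem_inter_iff]; tauto
    have g1' : D1 ∩ Y = Y ∩ D1 := Set.inter_comm _ _
    have g0' : D0 ∩ Y = Y ∩ D0 := Set.inter_comm _ _
    rw [meq g1, meq g1'] at f1
    rw [meq g0, meq g0'] at f0
    have hweights : m (Xs x ∩ (Y ∩ D1)) / m (Y ∩ D1) = m (Xs x ∩ (Y ∩ D0)) / m (Y ∩ D0) := by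
      field_simp at f1 f0
      rw [div_eq_div_iff hm1.ne' hm0.ne']
      have h1 : m (Xs x ∩ (Y ∩ D1)) * m Y = m (Xs x ∩ Y) * m (Y ∩ D1) :=
        mul_right_cancel₀ hyr.ne' (by linear_combination m Y * f1)
      have h0 : m (Xs x ∩ (Y ∩ D0)) * m Y = m (Xs x ∩ Y) * m (Y ∩ D0) :=
        mul_right_cancel₀ hyr.ne' (by linear_combination m Y * f0)
      exact mul_right_cancel₀ hyr.ne' (by linear_combination (m (Y ∩ D0) * h1 - m (Y ∩ D1) * h0))
    -- rewrite the RHS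
    have hRHSr : condP μ A (D1 ∩ Xs x) / condP μ Y (D0 ∩ Xs x) =
        m (A ∩ (D1 ∩ Xs x)) / m (Y ∩ (D1 ∩ Xs x)) := by
      show (m (A ∩ (D1 ∩ Xs x)) / m (D1 ∩ Xs x)) / (m (Y ∩ (D0 ∩ Xs x)) / m (D0 ∩ Xs x)) = _
      rw [hswitch]
      field_simp
    have hRHSw : condP μ (Xs x) (Y ∩ D0) = m (Xs x ∩ (Y ∩ D1)) / m (Y ∩ D1) := by
      show m (Xs x ∩ (Y ∩ D0)) / m (Y ∩ D0) = _
      rw [hweights]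
    rw [hRHSr, hRHSw]
    -- Fréchet bounds
    have hsub1 : A ∩ (Y ∩ D1) ∩ Xs x ⊆ Y ∩ (D1 ∩ Xs x) := by
      intro ω hω; exact ⟨hω.1.2.1, hω.1.2.2, hω.2⟩
    have hsub2 : A ∩ (Y ∩ D1) ∩ Xs x ⊆ A ∩ (D1 ∩ Xs x) := by
      intro ω hω; exact ⟨hω.1.1, hω.1.2.2, hω.2⟩
    have hc1b : Xs x ∩ (Y ∩ D1) = Y ∩ (D1 ∩ Xs x) := by
      ext ω; simp only [Set.mem_inter_iff]; tauto
    rw [meq hc1b]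
    have hminmul : min 1 (m (A ∩ (D1 ∩ Xs x)) / m (Y ∩ (D1 ∩ Xs x))) *
        (m (Y ∩ (D1 ∩ Xs x)) / m (Y ∩ D1)) =
        min (m (Y ∩ (D1 ∩ Xs x))) (m (A ∩ (D1 ∩ Xs x))) / m (Y ∩ D1) := by
      rw [← mul_div_assoc, min_mul_of_nonneg _ _ hb1.le, one_mul,
        div_mul_cancel₀ _ hb1.ne']
    rw [hminmul]
    gcongr
    exact le_min (mmono hsub1) (mmono hsub2)
  -- decompose the LHS
  have hLHS : condP μ A (Y ∩ D1) =
      ∑ x : ι, m (A ∩ (Y ∩ D1) ∩ Xs x) / m (Y ∩ D1) := by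
    show (μ (A ∩ (Y ∩ D1))).toReal / (μ (Y ∩ D1)).toReal = _
    rw [sum_decomp μ X hXm (A ∩ (Y ∩ D1)) (hA.inter (hY.inter hD1m)), Finset.sum_div]
  rw [hLHS]
  exact Finset.sum_le_sum fun x _ => key x
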